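/- arXiv:1704.05286 — 2 statements merged into one kernel-verified Lean document; each statement's English description precedes it below -/
import Mathlib

section
/- Let k be a positive integer and let Ω be a feasible potential maximal clique of G. Then Ω is buildable. -/
namespace TW

variable {V : Type} [Finite V]

/-- The open neighborhood of a vertex set `U`: vertices outside `U`
adjacent to some vertex of `U`. -/
def nbhd (G : SimpleGraph V) (U : Set V) : Set V :=
  {v | v ∉ U ∧ ∃ u ∈ U, G.Adj u v}

/-- The closed neighborhood `N[U] = U ∪ N(U)`. -/
def nbhdClosed (G : SimpleGraph V) (U : Set V) : Set V :=
  U ∪ nbhd G U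

/-- A set `C` is connected in `G` if the induced subgraph `G[C]` is connected. -/
def SetConnected (G : SimpleGraph V) (C : Set V) : Prop :=
  (G.induce C).Connected

/-- `C` is a component associated with `S`: a connected component of the
subgraph of `G` induced by the complement of `S`. -/
def IsCompAssoc (G : SimpleGraph V) (S C : Set V) : Prop :=
  SetConnected G C ∧ Disjoint C S ∧ nbhd G C ⊆ S

/-- `C` is a full component associated with `S`. -/
def IsFullComp (G : SimpleGraph V) (S C : Set V) : Prop :=
  IsCompAssoc G S C ∧ nbhd G C = S

/-- `S` is a minimal separator: at least two full components are associated with `S`. -/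
def MinimalSeparator (G : SimpleGraph V) (S : Set V) : Prop :=
  ∃ C D : Set V, IsFullComp G S C ∧ IsFullComp G S D ∧ C ≠ D

/-- The number of connected components of the subgraph induced by the complement of `S`. -/
noncomputable def numComponents (G : SimpleGraph V) (S : Set V) : ℕ :=
  Nat.card (G.induce (Sᶜ : Set V)).ConnectedComponent

/-- `S` is a separator of `G`: removing `S` increases the number of connected
components of `G`. -/
def Separator (G : SimpleGraph V) (S : Set V) : Prop :=
  numComponents G (∅ : Set V) < numComponents G S

/-- `S` is cliquish: every two distinct vertices of `S` are adjacent or lie in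
the neighborhood of a common component associated with `S`. -/
def Cliquish (G : SimpleGraph V) (S : Set V) : Prop :=
  ∀ u ∈ S, ∀ v ∈ S, u ≠ v →
    G.Adj u v ∨ ∃ C, IsCompAssoc G S C ∧ u ∈ nbhd G C ∧ v ∈ nbhd G C

/-- A graph is chordal if every induced cycle has length exactly three. -/
def IsChordal {W : Type} (H : SimpleGraph W) : Prop :=
  ∀ ⦃v : W⦄ (w : H.Walk v v), w.IsCycle →
    (∀ x ∈ w.support, ∀ y ∈ w.support, H.Adj x y → s(x, y) ∈ w.edges) →
    w.length = 3

/-- `H` is a minimal chordal completion of `G`. -/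
def MinChordalCompletion {W : Type} (G H : SimpleGraph W) : Prop :=
  G ≤ H ∧ IsChordal H ∧ ∀ H' : SimpleGraph W, G ≤ H' → H' ≤ H → IsChordal H' → H' = H

/-- `Ω` is a potential maximal clique of `G`: a clique in some minimal chordal
completion of `G`. -/
def PMC {W : Type} (G : SimpleGraph W) (Ω : Set W) : Prop :=
  ∃ H : SimpleGraph W, MinChordalCompletion G H ∧ H.IsClique Ω

/-- A tree-decomposition of `G`. -/
structure TreeDecomp {W : Type} (G : SimpleGraph W) where
  ι : Type
  tree : SimpleGraph ι
  isTree : tree.IsTree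
  bag : ι → Set W
  bag_cover : ∀ v : W, ∃ i, v ∈ bag i
  bag_edge : ∀ ⦃u v : W⦄, G.Adj u v → ∃ i, u ∈ bag i ∧ v ∈ bag i
  bag_conn : ∀ v : W, (tree.induce {i | v ∈ bag i}).Connected

/-- The width of a tree-decomposition: maximum bag size minus one. -/
noncomputable def TreeDecomp.width {W : Type} {G : SimpleGraph W} (td : TreeDecomp G) : ℕ :=
  (⨆ i, (td.bag i).ncard) - 1

/-- The treewidth of `G`: the minimum width over all tree-decompositions. -/
noncomputable def treewidth {W : Type} (G : SimpleGraph W) : ℕ :=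
  ⨅ td : TreeDecomp G, td.width

/-- The graph on `V` whose edges are all pairs of distinct vertices of `S`. -/
def cliqueOn {W : Type} (S : Set W) : SimpleGraph W where
  Adj u v := u ≠ v ∧ u ∈ S ∧ v ∈ S
  symm := ⟨fun u v ⟨h, hu, hv⟩ => ⟨h.symm, hv, hu⟩⟩
  loopless := ⟨fun u ⟨h, _, _⟩ => h rfl⟩

/-- `G⟨C⟩`: the graph on `N[C]` obtained from `G[N[C]]` by completing `N(C)` into a clique. -/
def gAngle (G : SimpleGraph V) (C : Set V) : SimpleGraph ↥(nbhdClosed G C) :=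
  (G ⊔ cliqueOn (nbhd G C)).induce (nbhdClosed G C)

/-- A connected set `C` is feasible if `tw(G⟨C⟩) ≤ k`. -/
def Feasible (G : SimpleGraph V) (k : ℕ) (C : Set V) : Prop :=
  treewidth (gAngle G C) ≤ k

/-- `crib S K`: the union of `K \ S` and all components associated with `K`
that are unconfined to `S` (i.e. whose neighborhood is not contained in `S`). -/
def crib (G : SimpleGraph V) (S K : Set V) : Set V :=
  (K \ S) ∪ ⋃ C ∈ {C : Set V | IsCompAssoc G K C ∧ ¬ nbhd G C ⊆ S}, C

section Order

variable [LinearOrder V]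

/-- The minimum element of a nonempty subset of a finite linear order. -/
noncomputable def setMin (U : Set V) (hU : U.Nonempty) : V :=
  wellFounded_lt.min U hU

/-- `U ≺ W`: `min U < min W` (for nonempty sets `U`, `W`). -/
def SetPrec (U W : Set V) : Prop :=
  ∃ (hU : U.Nonempty) (hW : W.Nonempty), setMin U hU < setMin W hW

/-- A connected set `C` is inbound if some full component `A` associated with
`N(C)` satisfies `A ≺ C`. -/
def Inbound (G : SimpleGraph V) (C : Set V) : Prop :=
  SetConnected G C ∧ ∃ A, IsFullComp G (nbhd G C) A ∧ SetPrec A C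

/-- A connected set is outbound if it is not inbound. -/
def Outbound (G : SimpleGraph V) (C : Set V) : Prop :=
  SetConnected G C ∧ ¬ ∃ A, IsFullComp G (nbhd G C) A ∧ SetPrec A C

open Classical in
/-- The outlet of `K`: `∅` if no non-full outbound component is associated with `K`;
otherwise `N(A)` for a non-full outbound component `A` associated with `K`
with `N(A)` maximal. -/
noncomputable def outlet (G : SimpleGraph V) (K : Set V) : Set V :=
  if h : ∃ A, IsCompAssoc G K A ∧ nbhd G A ≠ K ∧ Outbound G A ∧
      ∀ A', IsCompAssoc G K A' → nbhd G A' ≠ K → Outbound G A' →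
        ¬ nbhd G A ⊂ nbhd G A'
  then nbhd G h.choose
  else ∅

/-- `support K`: the components associated with `K` that are unconfined to `outlet K`. -/
def support (G : SimpleGraph V) (K : Set V) : Set (Set V) :=
  {C | IsCompAssoc G K C ∧ ¬ nbhd G C ⊆ outlet G K}

/-- An O-block `(N(A), A)` (with `A` outbound and `|N(A)| ≤ k`) is feasible if
`N(A) = ⋃_{C ∈ 𝒞} N(C)` for some set `𝒞` of feasible inbound connected sets. -/
def FeasibleOBlock (G : SimpleGraph V) (k : ℕ) (A : Set V) : Prop :=
  Outbound G A ∧ (nbhd G A).ncard ≤ k ∧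
    ∃ 𝒞 : Set (Set V), (∀ C ∈ 𝒞, Inbound G C ∧ Feasible G k C) ∧
      nbhd G A = ⋃ C ∈ 𝒞, nbhd G C

/-- A potential maximal clique `Ω` is buildable. -/
def Buildable (G : SimpleGraph V) (k : ℕ) (Ω : Set V) : Prop :=
  Ω.ncard ≤ k + 1 ∧
    ((∃ v : V, Ω = nbhdClosed G {v}) ∨
     (∃ 𝒞 ⊆ support G Ω, (∀ C ∈ 𝒞, Feasible G k C) ∧ Ω = ⋃ C ∈ 𝒞, nbhd G C) ∨
     (∃ A, FeasibleOBlock G k A ∧ ∃ v ∈ nbhd G A, Ω = nbhd G A ∪ (G.neighborSet v ∩ A)))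

end Order



variable {V : Type} {G : SimpleGraph V} {S C D : Set V} {a b c x y z : V}

/-- Reachability in `G` by walks avoiding `S`. -/
def AR (G : SimpleGraph V) (S : Set V) (a b : V) : Prop :=
  ∃ p : G.Walk a b, ∀ z ∈ p.support, z ∉ S

lemma AR.refl (ha : a ∉ S) : AR G S a a :=
  ⟨SimpleGraph.Walk.nil, by simp [ha]⟩

lemma AR.symm (h : AR G S a b) : AR G S b a := by
  obtain ⟨p, hp⟩ := h
  exact ⟨p.reverse, by simpa [SimpleGraph.Walk.support_reverse] using hp⟩

lemma AR.trans (h : AR G S a b) (h' : AR G S b c) : AR G S a c := by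
  obtain ⟨p, hp⟩ := h; obtain ⟨q, hq⟩ := h'
  refine ⟨p.append q, fun z hz => ?_⟩
  rw [SimpleGraph.Walk.mem_support_append_iff] at hz
  exact hz.elim (hp z) (hq z)

lemma AR.mono {S' : Set V} (hS : S' ⊆ S) (h : AR G S a b) : AR G S' a b := by
  obtain ⟨p, hp⟩ := h
  exact ⟨p, fun z hz hzS => hp z hz (hS hzS)⟩

lemma AR.single (hadj : G.Adj a b) (ha : a ∉ S) (hb : b ∉ S) : AR G S a b := by
  refine ⟨hadj.toWalk, ?_⟩
  intro z hz
  simp only [SimpleGraph.Walk.support_cons, SimpleGraph.Walk.support_nil, List.mem_cons,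
    List.mem_singleton, List.not_mem_nil, or_false] at hz
  rcases hz with rfl | rfl
  · exact ha
  · exact hb

lemma AR.not_mem_left (h : AR G S a b) : a ∉ S := by
  obtain ⟨p, hp⟩ := h; exact hp a p.start_mem_support

lemma AR.not_mem_right (h : AR G S a b) : b ∉ S := by
  obtain ⟨p, hp⟩ := h; exact hp b p.end_mem_support

lemma AR.mem_support (h : AR G S a b) : ∃ p : G.Walk a b, (∀ z ∈ p.support, z ∉ S) := h

/-- The component of `G ∖ S` containing `x`. -/
def comp (G : SimpleGraph V) (S : Set V) (x : V) : Set V := {y | AR G S x y}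

variable {G : SimpleGraph V} {S C D A B : Set V} {a b c x y z : V}

lemma mem_comp_self (hx : x ∉ S) : x ∈ comp G S x := AR.refl hx

lemma comp_disjoint_aux (hy : y ∈ comp G S x) : y ∉ S := AR.not_mem_right hy

/-- Walks witnessing membership in a component stay inside the component. -/
lemma comp_walk (hy : y ∈ comp G S x) :
    ∃ p : G.Walk x y, ∀ z ∈ p.support, z ∈ comp G S x := by
  classical
  obtain ⟨p, hp⟩ := hy
  refine ⟨p, fun z hz => ?_⟩
  exact ⟨p.takeUntil z hz, fun w hw => hp w (p.support_takeUntil_subset hz hw)⟩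

/-- Helper: a walk with support inside `C` yields reachability in the induced graph. -/
lemma reachable_induce_of_walk (p : G.Walk a b) (hp : ∀ z ∈ p.support, z ∈ C) :
    (G.induce C).Reachable ⟨a, hp a p.start_mem_support⟩ ⟨b, hp b p.end_mem_support⟩ := by
  induction p with
  | nil => rfl
  | @cons u w b h q ih =>
      have hu : u ∈ C := hp u (by simp)
      have hw : w ∈ C := hp w (by simp [SimpleGraph.Walk.support_cons])
      have hq : ∀ z ∈ q.support, z ∈ C := fun z hz => hp z (by simp [SimpleGraph.Walk.support_cons, hz])
      have : (G.induce C).Adj ⟨u, hu⟩ ⟨w, hw⟩ := h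
      exact (this.reachable).trans (ih hq)

lemma setConnected_of_walks (hne : C.Nonempty)
    (h : ∀ a ∈ C, ∀ b ∈ C, ∃ p : G.Walk a b, ∀ z ∈ p.support, z ∈ C) :
    TW.SetConnected G C := by
  haveI : Nonempty ↥C := ⟨⟨hne.choose, hne.choose_spec⟩⟩
  refine ⟨fun u w => ?_⟩
  obtain ⟨p, hp⟩ := h u.1 u.2 w.1 w.2
  simpa using reachable_induce_of_walk p hp

/-- From `SetConnected` we can extract walks staying inside the set. -/
lemma walks_of_setConnected (hC : TW.SetConnected G C) (ha : a ∈ C) (hb : b ∈ C) :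
    ∃ p : G.Walk a b, ∀ z ∈ p.support, z ∈ C := by
  obtain ⟨q⟩ := hC.preconnected ⟨a, ha⟩ ⟨b, hb⟩
  let emb : G.induce C ↪g G := SimpleGraph.Embedding.induce C
  refine ⟨(q.map emb.toHom).copy rfl rfl, ?_⟩
  intro z hz
  change z ∈ (q.map emb.toHom).support at hz
  rw [SimpleGraph.Walk.support_map] at hz
  obtain ⟨⟨w, hw⟩, _, rfl⟩ := List.mem_map.1 hz
  exact hw

lemma setConnected_nonempty (hC : TW.SetConnected G C) : C.Nonempty := by
  obtain ⟨⟨x, hx⟩⟩ := hC.nonempty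
  exact ⟨x, hx⟩

lemma mem_nbhd (hy : y ∉ C) (hx : x ∈ C) (hadj : G.Adj x y) : y ∈ TW.nbhd G C :=
  ⟨hy, x, hx, hadj⟩

lemma nbhd_not_mem (hy : y ∈ TW.nbhd G C) : y ∉ C := hy.1

/-- Closure property of associated components. -/
lemma IsCompAssoc.closure (hC : TW.IsCompAssoc G S C) (ha : a ∈ C) (hadj : G.Adj a b)
    (hbS : b ∉ S) : b ∈ C := by
  by_contra hb
  exact hbS (hC.2.2 (mem_nbhd hb ha hadj))

lemma comp_isCompAssoc (hx : x ∉ S) : TW.IsCompAssoc G S (comp G S x) := by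
  refine ⟨?_, ?_, ?_⟩
  · refine setConnected_of_walks ⟨x, mem_comp_self hx⟩ (fun a ha b hb => ?_)
    obtain ⟨p, hp⟩ := comp_walk ha
    obtain ⟨q, hq⟩ := comp_walk hb
    refine ⟨p.reverse.append q, fun z hz => ?_⟩
    rw [SimpleGraph.Walk.mem_support_append_iff, SimpleGraph.Walk.support_reverse,
      List.mem_reverse] at hz
    exact hz.elim (hp z) (hq z)
  · exact Set.disjoint_left.2 (fun a ha => comp_disjoint_aux ha)
  · rintro w ⟨hw, u, hu, hadj⟩
    by_contra hwS
    exact hw (AR.trans hu (AR.single hadj (comp_disjoint_aux hu) hwS))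

/-- Walking from inside an associated component, avoiding `S`, stays inside. -/
lemma IsCompAssoc.walk_mem (hC : TW.IsCompAssoc G S C) :
    ∀ {a b : V} (p : G.Walk a b), a ∈ C → (∀ z ∈ p.support, z ∉ S) → b ∈ C
  | _, _, SimpleGraph.Walk.nil, ha, _ => ha
  | _, _, SimpleGraph.Walk.cons h q, ha, hp =>
      hC.walk_mem q
        (hC.closure ha h (hp _ (by simp [SimpleGraph.Walk.support_cons])))
        (fun z hz => hp z (by simp [SimpleGraph.Walk.support_cons, hz]))

/-- An associated component equals the component of each of its members. -/
lemma IsCompAssoc.eq_comp (hC : TW.IsCompAssoc G S C) (hx : x ∈ C) : C = comp G S x := by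
  have hxS : x ∉ S := Set.disjoint_left.1 hC.2.1 hx
  apply Set.eq_of_subset_of_subset
  · intro y hy
    obtain ⟨p, hp⟩ := walks_of_setConnected hC.1 hx hy
    exact ⟨p, fun z hz => Set.disjoint_left.1 hC.2.1 (hp z hz)⟩
  · intro y hy
    obtain ⟨p, hp⟩ := hy
    exact hC.walk_mem p hx hp

/-- Two associated components are equal or disjoint. -/
lemma IsCompAssoc.eq_or_disjoint (hC : TW.IsCompAssoc G S C) (hD : TW.IsCompAssoc G S D) :
    C = D ∨ Disjoint C D := by
  by_cases h : (C ∩ D).Nonempty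
  · obtain ⟨x, hxC, hxD⟩ := h
    exact Or.inl ((hC.eq_comp hxC).trans (hD.eq_comp hxD).symm)
  · exact Or.inr (Set.disjoint_left.2 fun a haC haD => h ⟨a, haC, haD⟩)

lemma IsCompAssoc.nonempty (hC : TW.IsCompAssoc G S C) : C.Nonempty :=
  setConnected_nonempty hC.1

section MinLemmas
variable [Finite V] [LinearOrder V] {U W A' B' : Set V}

lemma setMin_mem (U : Set V) (hU : U.Nonempty) : TW.setMin U hU ∈ U :=
  WellFounded.min_mem _ U hU

lemma setMin_le (hU : U.Nonempty) (hx : x ∈ U) : TW.setMin U hU ≤ x :=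
  not_lt.1 (WellFounded.not_lt_min wellFounded_lt U hx)

lemma setMin_mono (hUW : U ⊆ W) (hU : U.Nonempty) (hW : W.Nonempty) :
    TW.setMin W hW ≤ TW.setMin U hU :=
  setMin_le hW (hUW (setMin_mem U hU))

/-- If `B ⊆ B'`, `B` nonempty, and `min B < min A`, with `A ⊆ A'`... basic SetPrec helper. -/
lemma setPrec_of_subsets (hBB : B ⊆ B') (hAA : A' ⊆ A) (hB : B.Nonempty) (hA' : A'.Nonempty)
    (h : TW.SetPrec B A) : TW.SetPrec B' A' := by
  obtain ⟨hB2, hA, hlt⟩ := h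
  exact ⟨hB.mono hBB, hA', lt_of_le_of_lt (setMin_mono hBB hB (hB.mono hBB))
    (lt_of_lt_of_le hlt (setMin_mono hAA hA' hA))⟩

end MinLemmas

section PartA

variable (H : SimpleGraph V)

/-- `H` with all edges joining distinct components of `G ∖ S` removed. -/
def Hmod (G H : SimpleGraph V) (S : Set V) : SimpleGraph V where
  Adj a b := H.Adj a b ∧ (a ∈ S ∨ b ∈ S ∨ AR G S a b)
  symm := by
    refine ⟨?_⟩
    rintro a b ⟨hadj, h⟩
    refine ⟨hadj.symm, ?_⟩
    rcases h with h | h | h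
    · exact Or.inr (Or.inl h)
    · exact Or.inl h
    · exact Or.inr (Or.inr h.symm)
  loopless := ⟨fun a h => H.irrefl h.1⟩

lemma Hmod_le : Hmod G H S ≤ H := fun _ _ h => h.1

lemma le_Hmod (hGH : G ≤ H) : G ≤ Hmod G H S := by
  intro a b hab
  refine ⟨hGH hab, ?_⟩
  by_cases ha : a ∈ S
  · exact Or.inl ha
  by_cases hb : b ∈ S
  · exact Or.inr (Or.inl hb)
  · exact Or.inr (Or.inr (AR.single hab ha hb))

/-- A walk in `Hmod` avoiding `S` witnesses `AR G S`. -/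
lemma Hmod_walk_AR : ∀ {a b : V} (p : (Hmod G H S).Walk a b),
    (∀ z ∈ p.support, z ∉ S) → AR G S a b
  | _, _, SimpleGraph.Walk.nil, hp => AR.refl (hp _ (by simp))
  | _, _, @SimpleGraph.Walk.cons _ _ a c _ h q, hp => by
      have ha : a ∉ S := hp _ (by simp)
      have hc : c ∉ S := hp _ (by simp [SimpleGraph.Walk.support_cons])
      have h1 : AR G S a c := by
        rcases h.2 with h' | h' | h'
        · exact absurd h' ha
        · exact absurd h' hc
        · exact h'
      exact h1.trans (Hmod_walk_AR q (fun z hz => hp z (by simp [SimpleGraph.Walk.support_cons, hz])))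

/-- In a nontrivial closed walk, membership in the support equals membership in its tail. -/
lemma mem_support_tail_of_closed {v : V} (c : G.Walk v v) (hc : c ≠ SimpleGraph.Walk.nil) (z : V) :
    z ∈ c.support ↔ z ∈ c.support.tail := by
  cases c with
  | nil => exact absurd rfl hc
  | cons h q =>
      simp only [SimpleGraph.Walk.support_cons, List.tail_cons, List.mem_cons]
      constructor
      · rintro (rfl | hz)
        · exact q.end_mem_support
        · exact hz
      · exact fun hz => Or.inr hz

/-- Key lemma: removing from a chordal graph all edges joining distinct components
of `G ∖ S`, where `S` is a clique of `H`, preserves chordality. -/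
lemma Hmod_isChordal (hH : TW.IsChordal H) (hS : H.IsClique S) :
    TW.IsChordal (Hmod G H S) := by
  classical
  intro v w hcyc hind
  by_contra hne
  -- transfer the cycle to H
  have hsub : ∀ e ∈ w.edges, e ∈ H.edgeSet := by
    intro e he
    have := w.edges_subset_edgeSet he
    exact SimpleGraph.edgeSet_mono (Hmod_le H) this
  have hcycH : (w.transfer H hsub).IsCycle := hcyc.transfer hsub
  -- H is chordal and the transferred cycle has length ≠ 3, so it has a chord
  have hlen : (w.transfer H hsub).length ≠ 3 := by
    rwa [SimpleGraph.Walk.length_transfer]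
  have hchord : ¬ (∀ x ∈ (w.transfer H hsub).support, ∀ y ∈ (w.transfer H hsub).support,
      H.Adj x y → s(x, y) ∈ (w.transfer H hsub).edges) := by
    intro h
    exact hlen (hH (w.transfer H hsub) hcycH h)
  push_neg at hchord
  obtain ⟨x, hx, y, hy, hxyH, hxy_ne⟩ := hchord
  rw [SimpleGraph.Walk.support_transfer] at hx hy
  rw [SimpleGraph.Walk.edges_transfer] at hxy_ne
  -- the chord is not an edge of Hmod
  have hnadj : ¬ (Hmod G H S).Adj x y := by
    intro h
    exact hxy_ne (hind x hx y hy h)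
  have hxS : x ∉ S := fun h => hnadj ⟨hxyH, Or.inl h⟩
  have hyS : y ∉ S := fun h => hnadj ⟨hxyH, Or.inr (Or.inl h)⟩
  have hAR : ¬ AR G S x y := fun h => hnadj ⟨hxyH, Or.inr (Or.inr h)⟩
  -- rotate the cycle to start at x
  set w' := w.rotate x hx with hw'
  have hcyc' : w'.IsCycle := hcyc.rotate hx
  have hsupp' : ∀ z, z ∈ w'.support ↔ z ∈ w.support := by
    intro z
    rw [mem_support_tail_of_closed w' hcyc'.ne_nil, mem_support_tail_of_closed w hcyc.ne_nil,
      (SimpleGraph.Walk.support_rotate w x hx).mem_iff]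
  have hedges' : ∀ e, e ∈ w'.edges ↔ e ∈ w.edges := by
    intro e
    exact (SimpleGraph.Walk.rotate_edges w x hx).mem_iff
  have hy' : y ∈ w'.support := (hsupp' y).2 hy
  -- split into two arcs
  set p := w'.takeUntil y hy' with hp
  set q := w'.dropUntil y hy' with hq
  have hspec : p.append q = w' := w'.take_spec hy'
  -- supports of the two arcs meet only in {x, y}
  have hdisj : ∀ z, z ∈ p.support → z ∈ q.support → z = x ∨ z = y := by
    intro z hzp hzq
    by_contra hcon
    push_neg at hcon
    have h1 : z ∈ p.support.tail := by
      have := p.support_eq_cons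
      rcases (by rw [this] at hzp; exact List.mem_cons.1 hzp : z = x ∨ z ∈ p.support.tail) with h | h
      · exact absurd h hcon.1
      · exact h
    have h2 : z ∈ q.support.tail := by
      have := q.support_eq_cons
      rcases (by rw [this] at hzq; exact List.mem_cons.1 hzq : z = y ∨ z ∈ q.support.tail) with h | h
      · exact absurd h hcon.2
      · exact h
    have hnodup : w'.support.tail.Nodup := hcyc'.2
    have hsupp_app : w'.support = p.support ++ q.support.tail := by
      rw [← hspec]; exact SimpleGraph.Walk.support_append p q
    have : w'.support.tail = p.support.tail ++ q.support.tail := by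
      rw [hsupp_app, p.support_eq_cons]; rfl
    rw [this] at hnodup
    exact (List.disjoint_of_nodup_append hnodup) h1 h2
  -- each arc contains a vertex of S
  have harc : ∀ (r : (Hmod G H S).Walk x y), ∃ a ∈ r.support, a ∈ S := by
    intro r
    by_contra hcon
    push_neg at hcon
    exact hAR (Hmod_walk_AR H r hcon)
  have harc' : ∀ (r : (Hmod G H S).Walk y x), ∃ a ∈ r.support, a ∈ S := by
    intro r
    by_contra hcon
    push_neg at hcon
    exact hAR (Hmod_walk_AR H r.reverse (by
      intro z hz
      rw [SimpleGraph.Walk.support_reverse, List.mem_reverse] at hz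
      exact hcon z hz))
  obtain ⟨a, hap, haS⟩ := harc p
  obtain ⟨b, hbq, hbS⟩ := harc' q
  have hax : a ≠ x := fun h => hxS (h ▸ haS)
  have hay : a ≠ y := fun h => hyS (h ▸ haS)
  have hbx : b ≠ x := fun h => hxS (h ▸ hbS)
  have hby : b ≠ y := fun h => hyS (h ▸ hbS)
  have hab : a ≠ b := by
    intro h
    rcases hdisj a hap (h ▸ hbq) with h' | h'
    · exact hax h'
    · exact hay h'
  -- a and b are adjacent in Hmod (both in the clique S)
  have habAdj : (Hmod G H S).Adj a b := ⟨hS haS hbS hab, Or.inl haS⟩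
  -- so s(a,b) is an edge of the cycle, contradiction
  have hmem : s(a, b) ∈ w.edges :=
    hind a ((hsupp' a).1 (by rw [← hspec, SimpleGraph.Walk.mem_support_append_iff]; exact Or.inl hap))
      b ((hsupp' b).1 (by rw [← hspec, SimpleGraph.Walk.mem_support_append_iff]; exact Or.inr hbq))
      habAdj
  have hmem' : s(a, b) ∈ p.edges ++ q.edges := by
    have : w'.edges = p.edges ++ q.edges := by
      rw [← hspec]; exact SimpleGraph.Walk.edges_append p q
    rw [← this]
    exact (hedges' _).2 hmem
  rcases List.mem_append.1 hmem' with h | h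
  · have : b ∈ p.support := SimpleGraph.Walk.snd_mem_support_of_mem_edges p h
    rcases hdisj b this hbq with h' | h'
    · exact hbx h'
    · exact hby h'
  · have : a ∈ q.support := SimpleGraph.Walk.fst_mem_support_of_mem_edges q h
    rcases hdisj a hap this with h' | h'
    · exact hax h'
    · exact hay h'

end PartA

/-- Every set that is a clique in some minimal chordal completion is cliquish. -/
lemma pmc_cliquish (hΩ : TW.PMC G Ω) : TW.Cliquish G Ω := by
  intro u hu v hv huv
  by_cases hadj : G.Adj u v
  · exact Or.inl hadj
  right
  obtain ⟨H, ⟨hGH, hH, hmin⟩, hclq⟩ := hΩ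
  set S : Set V := Ω \ {u, v} with hS
  have hSclq : H.IsClique S := hclq.subset Set.diff_subset
  have hH2 : TW.IsChordal (Hmod G H S) := Hmod_isChordal H hH hSclq
  have heq : Hmod G H S = H := hmin _ (le_Hmod H hGH) (Hmod_le H) hH2
  have huS : u ∉ S := fun h => h.2 (Or.inl rfl)
  have hvS : v ∉ S := fun h => h.2 (Or.inr rfl)
  have hHuv : H.Adj u v := hclq hu hv huv
  have hAR : AR G S u v := by
    have : (Hmod G H S).Adj u v := by rw [heq]; exact hHuv
    rcases this.2 with h | h | h
    · exact absurd h huS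
    · exact absurd h hvS
    · exact h
  -- extract a path
  classical
  obtain ⟨p0, hp0⟩ := hAR
  obtain ⟨p, hpath, hpS⟩ : ∃ p : G.Walk u v, p.IsPath ∧ ∀ z ∈ p.support, z ∉ S :=
    ⟨p0.toPath, p0.toPath.2, fun z hz => hp0 z (p0.support_toPath_subset hz)⟩
  have hΩsub : ∀ z, z ∉ S → z ≠ u → z ≠ v → z ∉ Ω := by
    intro z h1 h2 h3 hzΩ
    exact h1 ⟨hzΩ, by simp [h2, h3]⟩
  cases hp : p with
  | nil => exact absurd rfl huv
  | @cons _ z _ h q =>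
      subst hp
      have hzv : z ≠ v := by
        rintro rfl
        exact hadj h
      have hzu : z ≠ u := fun h' => G.irrefl (h' ▸ h)
      have hzS : z ∉ S := hpS z (by simp [SimpleGraph.Walk.support_cons])
      have hzΩ : z ∉ Ω := hΩsub z hzS hzu hzv
      set C : Set V := comp G Ω z with hC
      have hCassoc : TW.IsCompAssoc G Ω C := comp_isCompAssoc hzΩ
      have hzC : z ∈ C := mem_comp_self hzΩ
      have hdisjC : ∀ a ∈ C, a ∉ Ω := fun a ha => Set.disjoint_left.1 hCassoc.2.1 ha
      refine ⟨C, hCassoc, mem_nbhd (fun h' => hdisjC u h' hu) hzC h.symm, ?_⟩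
      -- v is adjacent to the last internal vertex z2 which lies in C
      have hqpath : q.IsPath := hpath.of_cons
      have huq : u ∉ q.support := by
        have := hpath
        rw [SimpleGraph.Walk.isPath_def, SimpleGraph.Walk.support_cons] at this
        exact fun hu' => (List.nodup_cons.1 this).1 hu'
      cases hq' : q.reverse with
      | nil =>
          exfalso
          have hlen : q.length = 0 := by
            have := congrArg SimpleGraph.Walk.length hq'
            simpa using this
          exact hzv (SimpleGraph.Walk.eq_of_length_eq_zero hlen)
      | @cons _ z2 _ h2 r =>
          -- h2 : G.Adj v z2, r : G.Walk z2 z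
          have hz2r : z2 ∈ q.support := by
            have : z2 ∈ q.reverse.support := by rw [hq']; simp [SimpleGraph.Walk.support_cons]
            rwa [SimpleGraph.Walk.support_reverse, List.mem_reverse] at this
          have hrq : ∀ w ∈ r.support, w ∈ q.support := by
            intro w hw
            have : w ∈ q.reverse.support := by
              rw [hq']; simp [SimpleGraph.Walk.support_cons, hw]
            rwa [SimpleGraph.Walk.support_reverse, List.mem_reverse] at this
          have hvr : v ∉ r.support := by
            have hrevpath : q.reverse.IsPath := hqpath.reverse
            rw [hq', SimpleGraph.Walk.isPath_def, SimpleGraph.Walk.support_cons] at hrevpath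
            exact (List.nodup_cons.1 hrevpath).1
          have hrΩ : ∀ w ∈ r.support, w ∉ Ω := by
            intro w hw
            refine hΩsub w (hpS w (by simp [SimpleGraph.Walk.support_cons]; exact Or.inr (hrq w hw)))
              (fun h' => huq (h' ▸ hrq w hw)) (fun h' => hvr (h' ▸ hw))
          have hz2C : z2 ∈ C := AR.symm (⟨r, hrΩ⟩ : AR G Ω z2 z)
          exact mem_nbhd (fun h' => hdisjC v h' hv) hz2C h2.symm

section PartB

variable [Finite V] [LinearOrder V]

theorem feasible_pmc_buildable' (G : SimpleGraph V)
    (hG : G.Connected) (k : ℕ) (hk : 0 < k) (Ω : Set V) (hΩ : TW.PMC G Ω)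
    (hcard : Ω.ncard ≤ k + 1) (hfeas : ∀ C ∈ TW.support G Ω, TW.Feasible G k C) :
    TW.Buildable G k Ω := by
  classical
  have hcl : TW.Cliquish G Ω := pmc_cliquish hΩ
  set o : Set V := TW.outlet G Ω with ho
  set W : Set V := ⋃ C ∈ TW.support G Ω, TW.nbhd G C with hW
  have hsuppW : ∀ C ∈ TW.support G Ω, TW.nbhd G C ⊆ W := by
    intro C hC x hx
    exact Set.mem_biUnion hC hx
  have hWsub : W ⊆ Ω := by
    intro x hx
    rw [hW, Set.mem_iUnion₂] at hx
    obtain ⟨C, hC, hxC⟩ := hx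
    exact hC.1.2.2 hxC
  refine ⟨hcard, ?_⟩
  by_cases hWeq : Ω ⊆ W
  · -- Option 2
    exact Or.inr (Or.inl ⟨TW.support G Ω, le_refl _, hfeas, Set.Subset.antisymm hWeq hWsub⟩)
  by_cases hcase1 : ∃ u ∈ Ω, u ∉ W ∧ u ∉ o
  · -- Option 1 : Ω = N[u]
    obtain ⟨u, huΩ, huW, huo⟩ := hcase1
    refine Or.inl ⟨u, ?_⟩
    have hkey : ∀ C, TW.IsCompAssoc G Ω C → u ∈ TW.nbhd G C → False := by
      intro C hC huC
      have hCsupp : C ∈ TW.support G Ω := ⟨hC, fun hsub => huo (hsub huC)⟩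
      exact huW (hsuppW C hCsupp huC)
    apply Set.Subset.antisymm
    · intro w hw
      by_cases hwu : w = u
      · exact Or.inl (by simp [hwu])
      · rcases hcl u huΩ w hw (Ne.symm hwu) with hadj | ⟨C, hC, huC, hwC⟩
        · exact Or.inr ⟨by simp [hwu], u, rfl, hadj⟩
        · exact absurd (hkey C hC huC) (by simp)
    · rintro x (hx | hx)
      · rw [Set.mem_singleton_iff] at hx
        exact hx ▸ huΩ
      · obtain ⟨hxu, w, hw, hadj⟩ := hx
        rw [Set.mem_singleton_iff] at hw
        subst hw
        by_contra hxΩ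
        have hCassoc := comp_isCompAssoc (G := G) hxΩ
        refine hkey _ hCassoc (mem_nbhd ?_ (mem_comp_self hxΩ) hadj.symm)
        exact fun h => (Set.disjoint_left.1 hCassoc.2.1 h) huΩ
  · -- Main case : Ω ∖ W ⊆ o ; option 3
    push_neg at hcase1
    obtain ⟨u0, hu0Ω, hu0W⟩ := Set.not_subset.1 hWeq
    have hu0o : u0 ∈ o := hcase1 u0 hu0Ω hu0W
    have hdite : ∃ A, TW.IsCompAssoc G Ω A ∧ TW.nbhd G A ≠ Ω ∧ TW.Outbound G A ∧
        ∀ A', TW.IsCompAssoc G Ω A' → TW.nbhd G A' ≠ Ω → TW.Outbound G A' →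
          ¬ TW.nbhd G A ⊂ TW.nbhd G A' := by
      by_contra hcon
      have : o = ∅ := by rw [ho, TW.outlet, dif_neg hcon]
      rw [this] at hu0o
      exact hu0o
    have hoA0 : o = TW.nbhd G hdite.choose := by rw [ho, TW.outlet, dif_pos hdite]
    set A0 := hdite.choose with hA0def
    obtain ⟨hA0assoc, hA0ne, hA0out, -⟩ := hdite.choose_spec
    have hoSub : o ⊆ Ω := hoA0 ▸ hA0assoc.2.2
    obtain ⟨a0, ha0⟩ := hA0assoc.nonempty
    have ha0Ω : a0 ∉ Ω := Set.disjoint_left.1 hA0assoc.2.1 ha0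
    have ha0W : a0 ∉ W := fun h => ha0Ω (hWsub h)
    set A : Set V := comp G W a0 with hA
    have hAassoc : TW.IsCompAssoc G W A := comp_isCompAssoc ha0W
    have hA0subA : A0 ⊆ A := by
      intro y hy
      have hy' : y ∈ comp G Ω a0 := (hA0assoc.eq_comp ha0) ▸ hy
      exact AR.mono hWsub hy'
    -- the cliquish argument
    have f4 : ∀ x ∈ o, x ∉ W → ∀ w ∈ Ω, w ∉ o → G.Adj x w := by
      intro x hxo hxW w hwΩ hwo
      have hxw : x ≠ w := fun h => hwo (h ▸ hxo)
      rcases hcl x (hoSub hxo) w hwΩ hxw with hadj | ⟨C, hC, hxC, hwC⟩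
      · exact hadj
      · exact absurd (hsuppW C ⟨hC, fun hsub => hwo (hsub hwC)⟩ hxC) hxW
    have f7 : ∀ x ∈ o, x ∉ W → x ∈ A := by
      intro x hxo hxW
      obtain ⟨hxA0, a, haA0, hadj⟩ := hoA0 ▸ hxo
      have haA : a ∈ A := hA0subA haA0
      exact AR.trans haA (AR.single hadj (fun h => (Set.disjoint_left.1 hA0assoc.2.1 haA0) (hWsub h)) hxW)
    have f6 : ∀ x ∈ Ω, x ∉ o → x ∈ W := by
      intro x hxΩ hxo
      by_contra hxW
      exact hxo (hcase1 x hxΩ hxW)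
    obtain ⟨v, hvΩ, hvo⟩ : ∃ v ∈ Ω, v ∉ o := by
      rcases Set.exists_of_ssubset (HasSubset.Subset.ssubset_of_ne hoSub
        (fun h => hA0ne (hoA0.symm.trans h))) with ⟨v, hv1, hv2⟩
      exact ⟨v, hv1, hv2⟩
    have hvW : v ∈ W := f6 v hvΩ hvo
    have f9 : TW.nbhd G A = W := by
      apply Set.Subset.antisymm hAassoc.2.2
      intro x hxW
      have hxA : x ∉ A := Set.disjoint_right.1 hAassoc.2.1 hxW
      by_cases hxo : x ∈ o
      · obtain ⟨-, a, haA0, hadj⟩ := hoA0 ▸ hxo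
        exact mem_nbhd hxA (hA0subA haA0) hadj
      · exact mem_nbhd hxA (f7 u0 hu0o hu0W) (f4 u0 hu0o hu0W x (hWsub hxW) hxo)
    have hXassocW : ∀ C ∈ TW.support G Ω, TW.IsCompAssoc G W C := by
      intro C hC
      exact ⟨hC.1.1, Set.disjoint_left.2
        (fun a ha haW => (Set.disjoint_left.1 hC.1.2.1 ha) (hWsub haW)), hsuppW C hC⟩
    have hA0nsupp : A0 ∉ TW.support G Ω := by
      intro h
      exact h.2 (by rw [← hoA0])
    have hsuppA : ∀ C ∈ TW.support G Ω, ¬ (C ∩ A).Nonempty := by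
      intro C hC ⟨x, hxC, hxA⟩
      have : C = A := by
        rcases (hXassocW C hC).eq_or_disjoint hAassoc with h | h
        · exact h
        · exact absurd hxA (Set.disjoint_left.1 h hxC)
      have ha0C : a0 ∈ C := this ▸ hA0subA ha0
      rcases hC.1.eq_or_disjoint hA0assoc with h | h
      · exact hA0nsupp (show A0 ∈ TW.support G Ω by rw [hA0def, ← h]; exact hC)
      · exact (Set.disjoint_left.1 h ha0C) ha0
    have f10 : Ω = TW.nbhd G A ∪ (G.neighborSet v ∩ A) := by
      rw [f9]
      apply Set.Subset.antisymm
      · intro w hw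
        by_cases hwW : w ∈ W
        · exact Or.inl hwW
        · have hwo : w ∈ o := hcase1 w hw hwW
          exact Or.inr ⟨(f4 w hwo hwW v hvΩ hvo).symm, f7 w hwo hwW⟩
      · rintro x (hx | ⟨hxv, hxA⟩)
        · exact hWsub hx
        · by_contra hxΩ
          have hCassoc := comp_isCompAssoc (G := G) hxΩ
          have hvC : v ∈ TW.nbhd G (comp G Ω x) :=
            mem_nbhd (fun h => (Set.disjoint_left.1 hCassoc.2.1 h) hvΩ) (mem_comp_self hxΩ)
              ((SimpleGraph.mem_neighborSet G v x).1 hxv).symm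
          exact hsuppA _ ⟨hCassoc, fun hsub => hvo (hsub hvC)⟩ ⟨x, mem_comp_self hxΩ, hxA⟩
    have f12 : TW.Outbound G A := by
      refine ⟨hAassoc.1, ?_⟩
      rintro ⟨B, ⟨hBassoc, hBfull⟩, hBprec⟩
      rw [f9] at hBassoc hBfull
      rcases hBassoc.eq_or_disjoint hAassoc with rfl | hdisjBA
      · obtain ⟨h1, h2, hlt⟩ := hBprec
        exact absurd hlt (lt_irrefl _)
      · have hBo : ∀ b ∈ B, b ∉ o := by
          intro b hb hbo
          have hbW : b ∉ W := Set.disjoint_left.1 hBassoc.2.1 hb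
          exact (Set.disjoint_left.1 hdisjBA hb) (f7 b hbo hbW)
        obtain ⟨hvB, b1, hb1, hb1adj⟩ : v ∈ TW.nbhd G B := hBfull ▸ hvW
        set B' : Set V := comp G o v with hB'
        have hB'assoc : TW.IsCompAssoc G o B' := comp_isCompAssoc hvo
        have hBsubB' : B ⊆ B' := by
          intro y hy
          have hy' : y ∈ comp G W b1 := (hBassoc.eq_comp hb1) ▸ hy
          obtain ⟨p, hp⟩ := comp_walk hy'
          have hARo : AR G o b1 y :=
            ⟨p, fun z hz => hBo z ((hBassoc.eq_comp hb1) ▸ hp z hz)⟩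
          exact AR.trans (AR.single hb1adj.symm hvo (hBo b1 hb1)) hARo
        have hB'full : TW.nbhd G B' = o := by
          apply Set.Subset.antisymm hB'assoc.2.2
          intro x hxo
          have hxB' : x ∉ B' := Set.disjoint_right.1 hB'assoc.2.1 hxo
          by_cases hxW : x ∈ W
          · obtain ⟨-, b, hb, hbadj⟩ : x ∈ TW.nbhd G B := hBfull ▸ hxW
            exact mem_nbhd hxB' (hBsubB' hb) hbadj
          · exact mem_nbhd hxB' (mem_comp_self hvo) (f4 x hxo hxW v hvΩ hvo).symm
        refine hA0out.2 ⟨B', ⟨?_, ?_⟩, ?_⟩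
        · rw [← hoA0]; exact hB'assoc
        · rw [← hoA0]; exact hB'full
        · exact setPrec_of_subsets hBsubB' hA0subA (hBassoc.nonempty) (hA0assoc.nonempty) hBprec
    have f13 : W.ncard ≤ k := by
      have hsub : W ⊆ Ω \ {u0} := fun x hx => ⟨hWsub hx, fun h => hu0W (h ▸ hx)⟩
      have h1 : W.ncard ≤ (Ω \ {u0}).ncard := Set.ncard_le_ncard hsub (Set.toFinite _)
      have h2 : (Ω \ {u0}).ncard = Ω.ncard - 1 := Set.ncard_diff_singleton_of_mem hu0Ω
      have h3 : 0 < Ω.ncard := (Set.ncard_pos (Set.toFinite Ω)).2 ⟨u0, hu0Ω⟩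
      omega
    -- every support component is inbound
    have f15 : ∀ C ∈ TW.support G Ω, TW.Inbound G C := by
      intro C hC
      have hCassoc : TW.IsCompAssoc G Ω C := hC.1
      have hCnbΩ : TW.nbhd G C ⊆ Ω := hCassoc.2.2
      have hCW : TW.nbhd G C ⊆ W := hsuppW C hC
      have ha0nb : a0 ∉ TW.nbhd G C := fun h => ha0Ω (hCnbΩ h)
      set B : Set V := comp G (TW.nbhd G C) a0 with hB
      have hBassoc : TW.IsCompAssoc G (TW.nbhd G C) B := comp_isCompAssoc ha0nb
      have hA0subB : A0 ⊆ B := by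
        intro y hy
        exact AR.mono hCnbΩ ((Set.ext_iff.1 (hA0assoc.eq_comp ha0) y).1 hy)
      have hu0B : u0 ∈ B := by
        obtain ⟨-, a, haA0, hadj⟩ := hoA0 ▸ hu0o
        refine AR.trans (hA0subB haA0) (AR.single hadj ?_ ?_)
        · exact fun h => (Set.disjoint_left.1 hA0assoc.2.1 haA0) (hCnbΩ h)
        · exact fun h => hu0W (hCW h)
      have hBfull : TW.nbhd G B = TW.nbhd G C := by
        apply Set.Subset.antisymm hBassoc.2.2
        intro x hx
        have hxB : x ∉ B := Set.disjoint_right.1 hBassoc.2.1 hx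
        by_cases hxo : x ∈ o
        · obtain ⟨-, a, haA0, hadj⟩ := hoA0 ▸ hxo
          exact mem_nbhd hxB (hA0subB haA0) hadj
        · exact mem_nbhd hxB hu0B (f4 u0 hu0o hu0W x (hCnbΩ hx) hxo)
      -- ordering argument via the component C' of o containing C
      obtain ⟨c0, hc0⟩ := hCassoc.nonempty
      have hc0Ω : c0 ∉ Ω := Set.disjoint_left.1 hCassoc.2.1 hc0
      have hc0o : c0 ∉ o := fun h => hc0Ω (hoSub h)
      set C' : Set V := comp G o c0 with hC'
      have hC'assoc : TW.IsCompAssoc G o C' := comp_isCompAssoc hc0o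
      have hCdisjo : ∀ y ∈ C, y ∉ o := fun y hy h =>
        (Set.disjoint_left.1 hCassoc.2.1 hy) (hoSub h)
      have hCsubC' : C ⊆ C' := by
        intro y hy
        obtain ⟨p, hp⟩ := comp_walk ((hCassoc.eq_comp hc0) ▸ hy)
        exact ⟨p, fun z hz => hCdisjo z ((hCassoc.eq_comp hc0) ▸ hp z hz)⟩
      obtain ⟨wC, hwC, hwCo⟩ := Set.not_subset.1 hC.2
      have hwCΩ : wC ∈ Ω := hCnbΩ hwC
      have hwCC' : wC ∈ C' := by
        obtain ⟨-, c, hcC, hcadj⟩ := hwC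
        exact AR.trans (hCsubC' hcC) (AR.single hcadj (hCdisjo c hcC) hwCo)
      -- all support components live in C'
      have hDsubC' : ∀ D ∈ TW.support G Ω, D ⊆ C' := by
        intro D hD
        obtain ⟨wD, hwD, hwDo⟩ := Set.not_subset.1 hD.2
        have hwDΩ : wD ∈ Ω := hD.1.2.2 hwD
        have hARwCwD : AR G o wC wD := by
          by_cases hne : wC = wD
          · exact hne ▸ AR.refl hwCo
          · rcases hcl wC hwCΩ wD hwDΩ hne with hadj | ⟨E, hE, hwCE, hwDE⟩
            · exact AR.single hadj hwCo hwDo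
            · obtain ⟨-, e1, he1, he1adj⟩ := hwCE
              obtain ⟨-, e2, he2, he2adj⟩ := hwDE
              have hEo : ∀ y ∈ E, y ∉ o := fun y hy h =>
                (Set.disjoint_left.1 hE.2.1 hy) (hoSub h)
              have hARe : AR G o e1 e2 := by
                obtain ⟨p, hp⟩ := comp_walk ((hE.eq_comp he1) ▸ he2)
                exact ⟨p, fun z hz => hEo z ((hE.eq_comp he1) ▸ hp z hz)⟩
              exact AR.trans (AR.single he1adj.symm hwCo (hEo e1 he1))
                (AR.trans hARe (AR.single he2adj (hEo e2 he2) hwDo))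
        intro y hy
        obtain ⟨-, d, hdD, hdadj⟩ := hwD
        have hDo : ∀ y' ∈ D, y' ∉ o := fun y' hy' h =>
          (Set.disjoint_left.1 hD.1.2.1 hy') (hoSub h)
        have hARd : AR G o d y := by
          obtain ⟨p, hp⟩ := comp_walk ((hD.1.eq_comp hdD) ▸ hy)
          exact ⟨p, fun z hz => hDo z ((hD.1.eq_comp hdD) ▸ hp z hz)⟩
        exact AR.trans (AR.trans (AR.trans hwCC' hARwCwD)
          (AR.single hdadj.symm hwDo (hDo d hdD))) hARd
      have hC'full : TW.nbhd G C' = o := by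
        apply Set.Subset.antisymm hC'assoc.2.2
        intro x hxo
        have hxC' : x ∉ C' := Set.disjoint_right.1 hC'assoc.2.1 hxo
        by_cases hxW : x ∈ W
        · rw [hW, Set.mem_iUnion₂] at hxW
          obtain ⟨D, hD, hxD⟩ := hxW
          obtain ⟨-, d, hdD, hdadj⟩ := hxD
          exact mem_nbhd hxC' (hDsubC' D hD hdD) hdadj
        · exact mem_nbhd hxC' hwCC' (f4 x hxo hxW wC hwCΩ hwCo).symm
      -- A0 and C' are distinct components of o
      have hA0assoc_o : TW.IsCompAssoc G o A0 := by
        refine ⟨hA0assoc.1, ?_, ?_⟩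
        · rw [hoA0]
          exact Set.disjoint_left.2 (fun a ha h => h.1 ha)
        · rw [hoA0]
      have hA0C' : Disjoint A0 C' := by
        rcases hA0assoc_o.eq_or_disjoint hC'assoc with h | h
        · exfalso
          have hc0C' : c0 ∈ C' := mem_comp_self hc0o
          have hc0A0 : c0 ∈ A0 := by rw [h]; exact hc0C'
          rcases hCassoc.eq_or_disjoint hA0assoc with h2 | h2
          · exact hC.2 (by rw [h2, ← hoA0])
          · exact (Set.disjoint_left.1 h2 hc0) hc0A0
        · exact h
      -- min chain
      have hC'ne : C'.Nonempty := ⟨c0, mem_comp_self hc0o⟩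
      have hA0ne' : A0.Nonempty := ⟨a0, ha0⟩
      have hBne : B.Nonempty := ⟨a0, mem_comp_self ha0nb⟩
      have hCne : C.Nonempty := ⟨c0, hc0⟩
      have hminle : TW.setMin A0 hA0ne' ≤ TW.setMin C' hC'ne := by
        by_contra hlt
        push_neg at hlt
        refine hA0out.2 ⟨C', ⟨?_, ?_⟩, hC'ne, hA0ne', hlt⟩
        · rw [← hoA0]; exact hC'assoc
        · rw [← hoA0]; exact hC'full
      have hminne : TW.setMin A0 hA0ne' ≠ TW.setMin C' hC'ne := by
        intro h
        have h1 := setMin_mem A0 hA0ne'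
        have h2 := setMin_mem C' hC'ne
        rw [← h] at h2
        exact (Set.disjoint_left.1 hA0C' h1) (h ▸ h2)
      refine ⟨hCassoc.1, B, ⟨hBassoc, hBfull⟩, hBne, hCne, ?_⟩
      calc TW.setMin B hBne ≤ TW.setMin A0 hA0ne' := setMin_mono hA0subB hA0ne' hBne
        _ < TW.setMin C' hC'ne := lt_of_le_of_ne hminle hminne
        _ ≤ TW.setMin C hCne := setMin_mono hCsubC' hCne hC'ne
    -- assemble option 3
    refine Or.inr (Or.inr ⟨A, ⟨f12, ?_, TW.support G Ω, fun C hC => ⟨f15 C hC, hfeas C hC⟩, ?_⟩,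
      v, ?_, f10⟩)
    · rw [f9]; exact f13
    · rw [f9, hW]
    · rw [f9]; exact hvW

end PartB
/-- Every feasible potential maximal clique is buildable. -/
theorem feasible_pmc_buildable {V : Type} [Finite V] [LinearOrder V] (G : SimpleGraph V)
    (hG : G.Connected) (k : ℕ) (hk : 0 < k) (Ω : Set V) (hΩ : PMC G Ω)
    (hcard : Ω.ncard ≤ k + 1) (hfeas : ∀ C ∈ support G Ω, Feasible G k C) :
    Buildable G k Ω := by
  exact feasible_pmc_buildable' G hG k hk Ω hΩ hcard hfeas

end TW
end

section
/- Let Ω ⊆ V(G) be a cliquish set with no full component associated with it, and let v ∈ Ω be a vertex such that v ∉ N(C) for every component C associated with Ω. Then Ω = N[v]. -/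
namespace TW

variable {V : Type} [Finite V]

/-- Every vertex outside `Ω` lies in a component associated with `Ω`. -/
lemma exists_comp_assoc (G : SimpleGraph V) (Ω : Set V) {w : V} (hw : w ∉ Ω) :
    ∃ C : Set V, IsCompAssoc G Ω C ∧ w ∈ C := by
  set H := G.induce (Ωᶜ : Set V) with hH
  have hw' : w ∈ (Ωᶜ : Set V) := hw
  set C : Set V := {x | ∃ hx : x ∈ (Ωᶜ : Set V), H.Reachable ⟨x, hx⟩ ⟨w, hw'⟩} with hC
  have hwC : w ∈ C := ⟨hw', SimpleGraph.Reachable.refl _⟩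
  have hsub : C ⊆ (Ωᶜ : Set V) := fun x hx => hx.1
  -- walks in H starting in C stay in C, and give reachability in G.induce C
  have key : ∀ {a b : ↥(Ωᶜ : Set V)} (_ : H.Walk a b) (ha : a.val ∈ C) (hb : b.val ∈ C),
      (G.induce C).Reachable ⟨a.val, ha⟩ ⟨b.val, hb⟩ := by
    intro a b p
    induction p with
    | nil => intro ha hb; exact SimpleGraph.Reachable.refl _
    | cons h p ih =>
      intro ha hb
      rename_i x y z
      have hy : y.val ∈ C := ⟨y.2, (h.symm.reachable).trans ha.choose_spec⟩
      have hadj : (G.induce C).Adj ⟨x.val, ha⟩ ⟨y.val, hy⟩ := h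
      exact hadj.reachable.trans (ih hy hb)
  refine ⟨C, ⟨?_, ?_, ?_⟩, hwC⟩
  · show (G.induce C).Connected
    rw [SimpleGraph.connected_iff]
    refine ⟨?_, ⟨⟨w, hwC⟩⟩⟩
    intro ⟨x, hx⟩ ⟨y, hy⟩
    obtain ⟨px⟩ := hx.choose_spec
    obtain ⟨py⟩ := hy.choose_spec
    exact (key px hx hwC).trans (key py hy hwC).symm
  · exact Set.disjoint_left.mpr fun x hx => hx.1
  · rintro y ⟨hyC, x, hx, hxy⟩
    by_contra hyΩ
    have hy' : y ∈ (Ωᶜ : Set V) := hyΩ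
    have : H.Adj ⟨x, hsub hx⟩ ⟨y, hy'⟩ := hxy
    exact hyC ⟨hy', this.symm.reachable.trans hx.choose_spec⟩

/-- If `Ω` is cliquish with no full component associated with it, and `v ∈ Ω` lies in
`N(C)` for no component `C` associated with `Ω`, then `Ω = N[v]`. -/
theorem cliquish_closed_neighborhood {V : Type} [Finite V] (G : SimpleGraph V)
    (hG : G.Connected) (Ω : Set V) (hcl : Cliquish G Ω)
    (hnf : ¬ ∃ C : Set V, IsFullComp G Ω C) (v : V) (hv : v ∈ Ω)
    (hvn : ∀ C : Set V, IsCompAssoc G Ω C → v ∉ nbhd G C) :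
    Ω = nbhdClosed G {v} := by
  apply Set.Subset.antisymm
  · intro u hu
    by_cases huv : u = v
    · exact Or.inl (huv ▸ rfl)
    · rcases hcl v hv u hu (Ne.symm huv) with hadj | ⟨C, hC, hvC, _⟩
      · exact Or.inr ⟨huv, v, rfl, hadj⟩
      · exact absurd hvC (hvn C hC)
  · rintro u (hu | ⟨hune, x, hx, hadj⟩)
    · exact hu ▸ hv
    · have hx' : x = v := hx
      rw [hx'] at hadj
      by_contra huΩ
      obtain ⟨C, hC, huC⟩ := exists_comp_assoc G Ω huΩ
      have hvnotC : v ∉ C := fun hvC => Set.disjoint_left.mp hC.2.1 hvC hv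
      exact hvn C hC ⟨hvnotC, u, huC, hadj.symm⟩

end TW
end
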